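/- In the multivariate polynomial ring MvPolynomial (Fin 2) (ZMod 3), with variables x and y, one has ∏_{v : Fin 3 → ZMod 3} (x + (v 0)·y) = x^27 − y^18·x^9. -/

import Mathlib

open MvPolynomial

theorem dickson_restriction_p3 :
    (∏ v : Fin 3 → ZMod 3,
        ((X 0 : MvPolynomial (Fin 2) (ZMod 3)) + C (v 0) * X 1))
      = (X 0) ^ 27 - (X 1) ^ 18 * (X 0) ^ 9 := by
  have h1 : (∏ v : Fin 3 → ZMod 3,
        ((X 0 : MvPolynomial (Fin 2) (ZMod 3)) + C (v 0) * X 1))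
      = ∏ p : (ZMod 3) × (Fin 2 → ZMod 3),
        ((X 0 : MvPolynomial (Fin 2) (ZMod 3)) + C p.1 * X 1) :=
    Fintype.prod_equiv (Fin.insertNthEquiv (fun _ => ZMod 3) 0).symm _ _ (fun v => rfl)
  rw [h1, Fintype.prod_prod_type]
  simp only [Finset.prod_const, Finset.card_univ, Fintype.card_pi]
  have huniv : (Finset.univ : Finset (ZMod 3)) = {0, 1, 2} := by decide
  have hcard : (Fintype.card (ZMod 3)) ^ (Fintype.card (Fin 2)) = 9 := rfl
  rw [hcard, huniv]
  rw [show ((2 : ZMod 3)) = -1 from rfl]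
  rw [Finset.prod_insert (by decide), Finset.prod_insert (by decide), Finset.prod_singleton]
  simp only [map_zero, map_one, map_neg, zero_mul, add_zero, one_mul, neg_mul, neg_one_mul]
  rw [← mul_pow, ← mul_pow,
    show ((X 0 : MvPolynomial (Fin 2) (ZMod 3)) * ((X 0 + X 1) * (X 0 + -X 1)))
      = (X 0) ^ 3 - X 0 * (X 1) ^ 2 by ring,
    show ((X 0 : MvPolynomial (Fin 2) (ZMod 3)) ^ 3 - X 0 * X 1 ^ 2) ^ 9
      = ((X 0) ^ 3) ^ 9 - (X 0 * X 1 ^ 2) ^ 9 by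
      have := sub_pow_char_pow (R := MvPolynomial (Fin 2) (ZMod 3)) (p := 3) (n := 2)
        (x := (X 0) ^ 3) (y := X 0 * X 1 ^ 2)
      norm_num at this
      exact this]
  ring
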